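/- Let R be a commutative ring and let 0 → A → B → C → 0 be a short exact sequence of finitely presented R-modules such that C admits a presentation Rⁿ → Rⁿ → C → 0 (a quadratic presentation). Then Fitt_R(B) = Fitt_R(A) · Fitt_R(C). -/

import Mathlib

open Finset in
/-- The zeroth Fitting ideal of a module: the ideal generated, over all finite generating
families `v` and all square matrices `A` whose rows are relations among the `v j`, by the
determinants `det A`. -/
noncomputable def fittingIdeal (R M : Type*) [CommRing R] [AddCommGroup M] [Module R M] :
    Ideal R :=
  ⨆ (n : ℕ) (v : Fin n → M) (_ : Submodule.span R (Set.range v) = ⊤),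
    Ideal.span {r : R | ∃ A : Matrix (Fin n) (Fin n) R,
      r = A.det ∧ ∀ i, ∑ j, A i j • v j = 0}

open Finset Matrix

section Aux

/-- The submodule of relations of a finite family `v`. -/
def relSub (R : Type*) [CommRing R] {M : Type*} [AddCommGroup M] [Module R M] {ι : Type*} [Fintype ι]
    (v : ι → M) : Submodule R (ι → R) where
  carrier := {x | ∑ j, x j • v j = 0}
  add_mem' {a b} ha hb := by
    simp only [Set.mem_setOf_eq] at *
    simp [Pi.add_apply, add_smul, Finset.sum_add_distrib, ha, hb]
  zero_mem' := by simp
  smul_mem' c x hx := by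
    simp only [Set.mem_setOf_eq] at *
    calc ∑ j, (c • x) j • v j = c • ∑ j, x j • v j := by
          rw [Finset.smul_sum]
          exact Finset.sum_congr rfl fun j _ => by
            rw [Pi.smul_apply, smul_eq_mul, mul_smul]
      _ = 0 := by rw [hx, smul_zero]

/-- Generators of the relation ideal of a family `v`. -/
def relGens (R : Type*) [CommRing R] {M : Type*} [AddCommGroup M] [Module R M] {ι : Type*} [Fintype ι] [DecidableEq ι]
    (v : ι → M) : Set R :=
  {r : R | ∃ A : Matrix ι ι R, r = A.det ∧ ∀ i, ∑ j, A i j • v j = 0}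

/-- The relation ideal of a family `v`. -/
noncomputable def relIdeal (R : Type*) [CommRing R] {M : Type*} [AddCommGroup M] [Module R M] {ι : Type*} [Fintype ι] [DecidableEq ι]
    (v : ι → M) : Ideal R :=
  Ideal.span (relGens R v)

variable {R : Type*} [CommRing R]

lemma det_eq_zero_of_rows_supported {ι : Type*} [Fintype ι] [DecidableEq ι]
    (M : Matrix ι ι R) (t J : Finset ι) (hcard : J.card < t.card)
    (hM : ∀ i ∈ t, ∀ j ∉ J, M i j = 0) : M.det = 0 := by
  rw [Matrix.det_apply]
  refine Finset.sum_eq_zero fun σ _ => ?_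
  obtain ⟨j, hjt, hjJ⟩ : ∃ j ∈ t.image ⇑σ.symm, j ∉ J := by
    by_contra h
    push_neg at h
    have := Finset.card_le_card h
    rw [Finset.card_image_of_injective _ σ.symm.injective] at this
    omega
  obtain ⟨x, hx, rfl⟩ := Finset.mem_image.mp hjt
  have h0 : M (σ (σ.symm x)) (σ.symm x) = 0 := by
    rw [Equiv.apply_symm_apply]
    exact hM _ hx _ hjJ
  rw [show (∏ i, M (σ i) i) = 0 from Finset.prod_eq_zero (Finset.mem_univ (σ.symm x)) h0, smul_zero]

lemma det_mem_span_relations {κ ι : Type*} [Fintype κ] [DecidableEq κ] [Fintype ι] [DecidableEq ι]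
    (L : Submodule R (ι → R)) (P : Matrix (κ ⊕ ι) (κ ⊕ ι) R)
    (hP : ∀ i, (fun j => P i (Sum.inr j)) ∈ L) :
    P.det ∈ Ideal.span {r : R | ∃ W : Matrix ι ι R, r = W.det ∧ ∀ i, (W i) ∈ L} := by
  classical
  set G : Set R := {r : R | ∃ W : Matrix ι ι R, r = W.det ∧ ∀ i, (W i) ∈ L} with hG
  set P₁ : Matrix (κ ⊕ ι) (κ ⊕ ι) R :=
    Matrix.of fun i => Sum.elim (fun c => P i (Sum.inl c)) 0 with hP₁
  set P₂ : Matrix (κ ⊕ ι) (κ ⊕ ι) R :=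
    Matrix.of fun i => Sum.elim 0 (fun j => P i (Sum.inr j)) with hP₂
  have hdet : P.det = ∑ s : Finset (κ ⊕ ι),
      (Matrix.of (s.piecewise (fun i => P₁ i) (fun i => P₂ i))).det := by
    have h1 : (P : Matrix (κ ⊕ ι) (κ ⊕ ι) R)
        = Matrix.of ((fun i => P₁ i) + (fun i => P₂ i)) := by
      ext i j
      cases j <;> simp [hP₁, hP₂]
    rw [h1]
    exact Matrix.detRowAlternating.toMultilinearMap.map_add_univ (fun i => P₁ i) (fun i => P₂ i)
  rw [hdet]
  refine Ideal.sum_mem _ fun s _ => ?_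
  set Ms : Matrix (κ ⊕ ι) (κ ⊕ ι) R :=
    Matrix.of (s.piecewise (fun i => P₁ i) (fun i => P₂ i)) with hMs
  have hrow_mem : ∀ i ∈ s, Ms i = P₁ i := fun i hi => s.piecewise_eq_of_mem _ _ hi
  have hrow_not : ∀ i ∉ s, Ms i = P₂ i := fun i hi => s.piecewise_eq_of_notMem _ _ hi
  have hcards : Fintype.card (κ ⊕ ι) = Fintype.card κ + Fintype.card ι := Fintype.card_sum
  rcases lt_trichotomy s.card (Fintype.card κ) with hlt | heq | hgt
  · -- too many rows supported on the `inr` columns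
    have h0 : Ms.det = 0 := by
      refine det_eq_zero_of_rows_supported Ms sᶜ
        (Finset.univ.map ⟨Sum.inr, Sum.inr_injective⟩) ?_ ?_
      · simp only [Finset.card_compl, Finset.card_map, Finset.card_univ]
        omega
      · intro i hi j hj
        rw [hrow_not i (Finset.mem_compl.mp hi)]
        cases j with
        | inl c => simp [hP₂]
        | inr j' => exact absurd (Finset.mem_map.mpr ⟨j', Finset.mem_univ _, rfl⟩) hj
    rw [h0]
    exact zero_mem _
  · -- main case
    have hsc : (sᶜ).card = Fintype.card ι := by
      simp only [Finset.card_compl, Finset.card_univ]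
      omega
    have hcs : Fintype.card κ = Fintype.card ↥s := by rw [Fintype.card_coe]; omega
    have hci : Fintype.card ι = Fintype.card ↥(sᶜ) := by rw [Fintype.card_coe]; omega
    let eκ : κ ≃ ↥s := Fintype.equivOfCardEq hcs
    let e2 : ↥(sᶜ) ≃ {a : κ ⊕ ι // ¬ a ∈ s} :=
      Equiv.subtypeEquivRight (fun a => by simp)
    let eι : ι ≃ {a : κ ⊕ ι // ¬ a ∈ s} := (Fintype.equivOfCardEq hci).trans e2
    let σ : Equiv.Perm (κ ⊕ ι) :=
      (Equiv.sumCongr eκ eι).trans (Equiv.sumCompl (· ∈ s))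
    have hσl : ∀ c, σ (Sum.inl c) ∈ s := fun c => by
      simpa [σ] using (eκ c).2
    have hσr : ∀ j, σ (Sum.inr j) ∉ s := fun j => by
      simpa [σ] using (eι j).2
    set W : Matrix ι ι R := Matrix.of fun j j' => P (σ (Sum.inr j)) (Sum.inr j') with hW
    set B11 : Matrix κ κ R := Matrix.of fun c c' => P (σ (Sum.inl c)) (Sum.inl c') with hB11
    have hN : Ms.submatrix σ id = Matrix.fromBlocks B11 0 0 W := by
      ext i j
      cases i with
      | inl c =>
        have h1 : Ms (σ (Sum.inl c)) = P₁ (σ (Sum.inl c)) := hrow_mem _ (hσl c)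
        cases j <;> simp [Matrix.submatrix_apply, h1, hP₁, hB11, Matrix.fromBlocks]
      | inr j' =>
        have h1 : Ms (σ (Sum.inr j')) = P₂ (σ (Sum.inr j')) := hrow_not _ (hσr j')
        cases j <;> simp [Matrix.submatrix_apply, h1, hP₂, hW, Matrix.fromBlocks]
    have hWmem : W.det ∈ Ideal.span G :=
      Ideal.subset_span ⟨W, rfl, fun j => hP (σ (Sum.inr j))⟩
    have hBW : B11.det * W.det ∈ Ideal.span G := Ideal.mul_mem_left _ _ hWmem
    have hperm := Matrix.det_permute σ Ms
    rw [hN, Matrix.det_fromBlocks_zero₂₁] at hperm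
    rcases Int.units_eq_one_or (Equiv.Perm.sign σ) with hs1 | hs1 <;> rw [hs1] at hperm
    · rw [show Ms.det = B11.det * W.det by
        simpa using hperm.symm]
      exact hBW
    · rw [show Ms.det = -(B11.det * W.det) by
        simp only [Units.val_neg, Units.val_one, Int.cast_neg, Int.cast_one,
          neg_mul, one_mul] at hperm
        rw [hperm, neg_neg]]
      exact neg_mem hBW
  · -- too many rows supported on the `inl` columns
    have h0 : Ms.det = 0 := by
      refine det_eq_zero_of_rows_supported Ms s
        (Finset.univ.map ⟨Sum.inl, Sum.inl_injective⟩) ?_ ?_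
      · simp only [Finset.card_map, Finset.card_univ]
        omega
      · intro i hi j hj
        rw [hrow_mem i hi]
        cases j with
        | inl c => exact absurd (Finset.mem_map.mpr ⟨c, Finset.mem_univ _, rfl⟩) hj
        | inr j' => simp [hP₁]
    rw [h0]
    exact zero_mem _


variable {M : Type*} [AddCommGroup M] [Module R M]

lemma relGens_comp_equiv_subset {ι ι' : Type*} [Fintype ι] [DecidableEq ι]
    [Fintype ι'] [DecidableEq ι'] (e : ι' ≃ ι) (v : ι → M) :
    relGens R (v ∘ e) ⊆ relGens R v := by
  rintro r ⟨A', rfl, hrel⟩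
  refine ⟨A'.submatrix e.symm e.symm, (Matrix.det_submatrix_equiv_self e.symm A').symm,
    fun i => ?_⟩
  rw [Fintype.sum_equiv e.symm (fun j => A'.submatrix e.symm e.symm i j • v j)
    (fun j' => A' (e.symm i) j' • (v ∘ e) j')
    (fun j => by simp [Matrix.submatrix_apply, Function.comp])]
  exact hrel (e.symm i)

lemma relIdeal_comp_equiv {ι ι' : Type*} [Fintype ι] [DecidableEq ι]
    [Fintype ι'] [DecidableEq ι'] (e : ι' ≃ ι) (v : ι → M) :
    relIdeal R (v ∘ e) = relIdeal R v := by
  refine le_antisymm (Ideal.span_mono (relGens_comp_equiv_subset e v)) (Ideal.span_mono ?_)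
  have h : v = (v ∘ e) ∘ e.symm := by funext i; simp
  nth_rewrite 1 [h]
  exact relGens_comp_equiv_subset e.symm (v ∘ e)

lemma relGens_eq_relSub {ι : Type*} [Fintype ι] [DecidableEq ι] (v : ι → M) :
    relGens R v = {r : R | ∃ W : Matrix ι ι R, r = W.det ∧ ∀ i, (W i) ∈ relSub R v} := rfl

lemma relIdeal_le_elim {ι κ : Type*} [Fintype ι] [DecidableEq ι] [Fintype κ] [DecidableEq κ]
    (v : ι → M) (w : κ → M) (hw : Submodule.span R (Set.range w) = ⊤) :
    relIdeal R w ≤ relIdeal R (Sum.elim v w) := by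
  refine Ideal.span_le.mpr ?_
  rintro r ⟨A, rfl, hrel⟩
  refine Ideal.subset_span ?_
  have hmem : ∀ i : ι, v i ∈ Submodule.span R (Set.range w) := fun i => hw ▸ Submodule.mem_top
  choose Cc hC using fun i : ι => (Submodule.mem_span_range_iff_exists_fun R).mp (hmem i)
  refine ⟨Matrix.fromBlocks 1 (Matrix.of fun i l => -(Cc i l)) 0 A,
    by rw [Matrix.det_fromBlocks_zero₂₁, Matrix.det_one, one_mul], fun i => ?_⟩
  rw [Fintype.sum_sum_type]
  cases i with
  | inl i =>
    simp only [Matrix.fromBlocks_apply₁₁, Matrix.fromBlocks_apply₁₂, Sum.elim_inl,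
      Sum.elim_inr, Matrix.of_apply, neg_smul]
    have hone : ∑ i', (1 : Matrix ι ι R) i i' • v i'
        = ∑ i', (if i = i' then (1:R) else 0) • v i' :=
      Finset.sum_congr rfl fun i' _ => by rw [Matrix.one_apply]
    rw [hone]
    simp [ite_smul, hC i]
  | inr l =>
    simp only [Matrix.fromBlocks_apply₂₁, Matrix.fromBlocks_apply₂₂, Sum.elim_inl,
      Sum.elim_inr, Matrix.zero_apply, zero_smul, Finset.sum_const_zero, zero_add]
    exact hrel l

lemma relIdeal_elim_le {ι κ : Type*} [Fintype ι] [DecidableEq ι] [Fintype κ] [DecidableEq κ]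
    (v : ι → M) (w : κ → M) (hv : Submodule.span R (Set.range v) = ⊤) :
    relIdeal R (Sum.elim v w) ≤ relIdeal R v := by
  refine Ideal.span_le.mpr ?_
  rintro r ⟨M0, rfl, hrel⟩
  have hmem : ∀ l : κ, w l ∈ Submodule.span R (Set.range v) := fun l => hv ▸ Submodule.mem_top
  choose Cc hC using fun l : κ => (Submodule.mem_span_range_iff_exists_fun R).mp (hmem l)
  set E : Matrix (ι ⊕ κ) (ι ⊕ κ) R := Matrix.fromBlocks 1 0 (Matrix.of Cc) 1 with hE
  set M' : Matrix (ι ⊕ κ) (ι ⊕ κ) R := M0 * E with hM'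
  have hdet' : M'.det = M0.det := by
    rw [hM', Matrix.det_mul, hE, Matrix.det_fromBlocks_zero₁₂, Matrix.det_one, Matrix.det_one, one_mul, mul_one]
  have hexp : ∀ i j, M' i (Sum.inl j) = M0 i (Sum.inl j) + ∑ l, M0 i (Sum.inr l) * Cc l j := by
    intro i j
    rw [hM', Matrix.mul_apply, Fintype.sum_sum_type, hE]
    simp [Matrix.one_apply, mul_ite]
  have hM'rel : ∀ i, (fun j => M' i (Sum.inl j)) ∈ relSub R v := by
    intro i
    show ∑ j, M' i (Sum.inl j) • v j = 0
    calc ∑ j, M' i (Sum.inl j) • v j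
        = ∑ j, M0 i (Sum.inl j) • v j
            + ∑ j, (∑ l, M0 i (Sum.inr l) * Cc l j) • v j := by
          rw [← Finset.sum_add_distrib]
          exact Finset.sum_congr rfl fun j _ => by rw [hexp i j, add_smul]
      _ = ∑ j, M0 i (Sum.inl j) • v j + ∑ l, M0 i (Sum.inr l) • w l := by
          congr 1
          rw [Finset.sum_congr rfl fun j _ => Finset.sum_smul, Finset.sum_comm]
          exact Finset.sum_congr rfl fun l _ => by
            rw [← hC l, Finset.smul_sum]
            exact Finset.sum_congr rfl fun j _ => by rw [mul_smul]
      _ = ∑ z, M0 i z • Sum.elim v w z := by rw [Fintype.sum_sum_type]; simp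
      _ = 0 := hrel i
  let e : κ ⊕ ι ≃ ι ⊕ κ := Equiv.sumComm κ ι
  have hKL := det_mem_span_relations (relSub R v) (M'.submatrix e e) (fun i => hM'rel (e i))
  rw [Matrix.det_submatrix_equiv_self, hdet'] at hKL
  rw [relIdeal, relGens_eq_relSub]
  exact hKL

lemma fittingIdeal_def : fittingIdeal R M
    = ⨆ (n : ℕ) (v : Fin n → M) (_ : Submodule.span R (Set.range v) = ⊤),
      relIdeal R v := rfl

lemma relIdeal_le_fittingIdeal {ι : Type*} [Fintype ι] [DecidableEq ι] (v : ι → M)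
    (hv : Submodule.span R (Set.range v) = ⊤) : relIdeal R v ≤ fittingIdeal R M := by
  classical
  let e := (Fintype.equivFin ι).symm
  have h1 : relIdeal R (v ∘ e) = relIdeal R v := relIdeal_comp_equiv e v
  have h2 : Submodule.span R (Set.range (v ∘ e)) = ⊤ := by
    rwa [e.surjective.range_comp]
  rw [← h1, fittingIdeal_def]
  exact le_iSup_of_le (Fintype.card ι) (le_iSup_of_le (v ∘ ⇑e) (le_iSup_of_le h2 le_rfl))

theorem fittingIdeal_eq_relIdeal {ι : Type*} [Fintype ι] [DecidableEq ι] (v : ι → M)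
    (hv : Submodule.span R (Set.range v) = ⊤) : fittingIdeal R M = relIdeal R v := by
  refine le_antisymm ?_ (relIdeal_le_fittingIdeal v hv)
  rw [fittingIdeal_def]
  refine iSup_le fun q => iSup_le fun w => iSup_le fun hw => ?_
  exact le_trans (relIdeal_le_elim v w hw) (relIdeal_elim_le v w hv)

lemma sum_single_smul {ι : Type*} [Fintype ι] [DecidableEq ι] (x : ι → R) :
    ∑ j, x j • (Pi.single j (1 : R) : ι → R) = x := by
  conv_rhs => rw [← Finset.univ_sum_single x]
  exact Finset.sum_congr rfl fun j _ => by rw [← Pi.single_smul, smul_eq_mul, mul_one]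

lemma lmap_apply_eq_sum {ι : Type*} [Fintype ι] [DecidableEq ι] {N : Type*} [AddCommGroup N]
    [Module R N] (ψ : (ι → R) →ₗ[R] N) (x : ι → R) :
    ψ x = ∑ j, x j • ψ (Pi.single j 1) := by
  rw [show ψ x = ψ (∑ j, x j • (Pi.single j (1 : R) : ι → R)) from by rw [sum_single_smul],
    map_sum]
  exact Finset.sum_congr rfl fun j _ => by rw [ψ.map_smul]

lemma sum_swap_smul {ι κ : Type*} [Fintype ι] [Fintype κ]
    (T : κ → R) (X : κ → ι → R) (m : ι → M) :
    ∑ j, (∑ k, T k * X k j) • m j = ∑ k, T k • ∑ j, X k j • m j := by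
  calc ∑ j, (∑ k, T k * X k j) • m j = ∑ j, ∑ k, (T k * X k j) • m j :=
        Finset.sum_congr rfl fun j _ => Finset.sum_smul
    _ = ∑ k, ∑ j, (T k * X k j) • m j := Finset.sum_comm
    _ = ∑ k, T k • ∑ j, X k j • m j := Finset.sum_congr rfl fun k _ => by
        rw [Finset.smul_sum]
        exact Finset.sum_congr rfl fun j _ => mul_smul _ _ _

lemma lmap_sum_smul {M N : Type*} [AddCommGroup M] [Module R M] [AddCommGroup N] [Module R N]
    {ι : Type*} [Fintype ι] (F : M →ₗ[R] N) (t : ι → R) (m : ι → M) :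
    F (∑ j, t j • m j) = ∑ j, t j • F (m j) := by
  rw [map_sum]; exact Finset.sum_congr rfl fun j _ => F.map_smul _ _

end Aux

/-- (Johnston–Nickel) If `0 → A → B → C → 0` is a short exact sequence of finitely presented
modules over a commutative ring `R` and `C` admits a quadratic presentation
`Rⁿ → Rⁿ → C → 0`, then `Fitt_R(B) = Fitt_R(A) · Fitt_R(C)`. -/
theorem fittingIdeal_of_quadratically_presented_quotient {R A B C : Type*} [CommRing R]
    [AddCommGroup A] [Module R A] [AddCommGroup B] [Module R B] [AddCommGroup C] [Module R C]
    [Module.FinitePresentation R A] [Module.FinitePresentation R B]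
    [Module.FinitePresentation R C]
    (f : A →ₗ[R] B) (g : B →ₗ[R] C)
    (hf : Function.Injective f) (hg : Function.Surjective g) (hfg : Function.Exact f g)
    (hC : ∃ (n : ℕ) (φ : (Fin n → R) →ₗ[R] (Fin n → R)) (ψ : (Fin n → R) →ₗ[R] C),
      Function.Surjective ψ ∧ Function.Exact φ ψ) :
    fittingIdeal R B = fittingIdeal R A * fittingIdeal R C := by
  classical
  obtain ⟨n, φ, ψ, hψ, hφψ⟩ := hC
  have hgf : ∀ z : A, g (f z) = 0 := fun z => (hfg (f z)).mpr ⟨z, rfl⟩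
  set c : Fin n → C := fun j => ψ (Pi.single j 1) with hc
  have hψx : ∀ x : Fin n → R, ψ x = ∑ j, x j • c j := fun x => lmap_apply_eq_sum ψ x
  have hcspan : Submodule.span R (Set.range c) = ⊤ := by
    rw [eq_top_iff]
    rintro y -
    obtain ⟨x, rfl⟩ := hψ y
    rw [hψx]
    exact Submodule.sum_mem _ fun j _ =>
      Submodule.smul_mem _ _ (Submodule.subset_span ⟨j, rfl⟩)
  choose w hw using fun j => hg (c j)
  obtain ⟨b, a, haspan⟩ := Module.Finite.exists_fin (R := R) (M := A)
  set u : Fin n ⊕ Fin b → B := Sum.elim w (fun j => f (a j)) with hu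
  have huspan : Submodule.span R (Set.range u) = ⊤ := by
    rw [eq_top_iff]
    rintro x -
    obtain ⟨r, hr⟩ := (Submodule.mem_span_range_iff_exists_fun R).mp
      (hcspan ▸ Submodule.mem_top : g x ∈ Submodule.span R (Set.range c))
    have hker : g (x - ∑ j, r j • w j) = 0 := by
      rw [map_sub, sub_eq_zero, map_sum, ← hr]
      exact Finset.sum_congr rfl fun j _ => by rw [g.map_smul, hw]
    obtain ⟨a0, ha0⟩ := (hfg _).mp hker
    obtain ⟨s, hs⟩ := (Submodule.mem_span_range_iff_exists_fun R).mp
      (haspan ▸ Submodule.mem_top : a0 ∈ Submodule.span R (Set.range a))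
    have hxeq : x = ∑ j, r j • u (Sum.inl j) + ∑ j, s j • u (Sum.inr j) := by
      have h1 : ∑ j, s j • u (Sum.inr j) = f a0 := by
        rw [← hs, lmap_sum_smul]
        rfl
      rw [h1, ha0, hu]
      simp only [Sum.elim_inl]
      abel
    rw [hxeq]
    exact add_mem
      (Submodule.sum_mem _ fun j _ =>
        Submodule.smul_mem _ _ (Submodule.subset_span ⟨Sum.inl j, rfl⟩))
      (Submodule.sum_mem _ fun j _ =>
        Submodule.smul_mem _ _ (Submodule.subset_span ⟨Sum.inr j, rfl⟩))
  have hB : fittingIdeal R B = relIdeal R u := fittingIdeal_eq_relIdeal u huspan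
  have hA : fittingIdeal R A = relIdeal R a := fittingIdeal_eq_relIdeal a haspan
  have hCfit : fittingIdeal R C = relIdeal R c := fittingIdeal_eq_relIdeal c hcspan
  set hm : Matrix (Fin n) (Fin n) R := Matrix.of fun k => φ (Pi.single k 1) with hhm
  have hrowc : ∀ k, ∑ j, hm k j • c j = 0 := fun k =>
    (hψx (φ (Pi.single k 1))).symm.trans ((hφψ _).mpr ⟨_, rfl⟩)
  have hdet_hm : hm.det ∈ fittingIdeal R C :=
    hCfit ▸ Ideal.subset_span ⟨hm, rfl, hrowc⟩
  have hker2 : ∀ k, g (∑ j, hm k j • w j) = 0 := fun k => by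
    rw [map_sum, ← hrowc k]
    exact Finset.sum_congr rfl fun j _ => by rw [g.map_smul, hw]
  choose y hy using fun k => (hfg _).mp (hker2 k)
  choose xco hxco using fun k => (Submodule.mem_span_range_iff_exists_fun R).mp
    (haspan ▸ Submodule.mem_top : y k ∈ Submodule.span R (Set.range a))
  set X : Matrix (Fin n) (Fin b) R := Matrix.of fun k j => -(xco k j) with hX
  have hXrel : ∀ k, ∑ j, X k j • f (a j) = - ∑ j, hm k j • w j := fun k => by
    have h3 : ∑ j, X k j • f (a j) = - ∑ j, xco k j • f (a j) := by
      rw [← Finset.sum_neg_distrib]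
      exact Finset.sum_congr rfl fun j _ => by
        show (-(xco k j)) • f (a j) = -(xco k j • f (a j))
        rw [neg_smul]
    rw [h3, ← lmap_sum_smul f, hxco, hy]
  apply le_antisymm
  · -- hard direction: Fitt B ≤ Fitt A * Fitt C
    rw [hB, relIdeal]
    refine Ideal.span_le.mpr ?_
    rintro r ⟨M0, rfl, hrel⟩
    have hrel' : ∀ i, ∑ j, M0 i (Sum.inl j) • w j + ∑ j, M0 i (Sum.inr j) • f (a j) = 0 := by
      intro i
      have h4 := hrel i
      rw [Fintype.sum_sum_type] at h4
      simpa [hu] using h4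
    have hpsi : ∀ i, ψ (fun j => M0 i (Sum.inl j)) = 0 := by
      intro i
      rw [hψx]
      have h5 : ∑ j, M0 i (Sum.inl j) • c j = g (∑ j, M0 i (Sum.inl j) • w j) := by
        rw [lmap_sum_smul]
        exact Finset.sum_congr rfl fun j _ => by rw [hw]
      rw [h5, show (∑ j, M0 i (Sum.inl j) • w j) = - ∑ j, M0 i (Sum.inr j) • f (a j) from
        eq_neg_of_add_eq_zero_left (hrel' i), map_neg, lmap_sum_smul]
      simp [hgf]
    choose t ht using fun i => (hφψ _).mp (hpsi i)
    set T : Matrix (Fin n ⊕ Fin b) (Fin n) R := Matrix.of fun i k => t i k with hT0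
    have hT : ∀ i j, M0 i (Sum.inl j) = ∑ k, T i k * hm k j := by
      intro i j
      have h6 : φ (t i) = ∑ k, t i k • φ (Pi.single k 1) := lmap_apply_eq_sum φ (t i)
      calc M0 i (Sum.inl j) = φ (t i) j := (congrFun (ht i) j).symm
        _ = ∑ k, (t i k • φ (Pi.single k 1)) j := by rw [h6, Finset.sum_apply]
        _ = ∑ k, T i k * hm k j := Finset.sum_congr rfl fun k _ => by
            rw [Pi.smul_apply, smul_eq_mul]
            rfl
    set U : Matrix (Fin n ⊕ Fin b) (Fin b) R :=
      Matrix.of fun i j => M0 i (Sum.inr j) - ∑ k, T i k * X k j with hU0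
    have hU : ∀ i, ∑ j, U i j • a j = 0 := by
      intro i
      apply hf
      rw [map_zero, lmap_sum_smul]
      have h8 : ∀ j, U i j • f (a j)
          = M0 i (Sum.inr j) • f (a j) - (∑ k, T i k * X k j) • f (a j) := fun j => by
        show (M0 i (Sum.inr j) - ∑ k, T i k * X k j) • f (a j) = _
        rw [sub_smul]
      rw [Finset.sum_congr rfl fun j _ => h8 j, Finset.sum_sub_distrib]
      have h9 : ∑ j, (∑ k, T i k * X k j) • f (a j) = ∑ k, T i k • ∑ j, X k j • f (a j) :=
        sum_swap_smul _ _ _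
      have h10 : ∑ k, T i k • ∑ j, X k j • f (a j) = - ∑ k, T i k • ∑ j, hm k j • w j := by
        rw [← Finset.sum_neg_distrib]
        exact Finset.sum_congr rfl fun k _ => by rw [hXrel k, smul_neg]
      have h11 : ∑ k, T i k • ∑ j, hm k j • w j = ∑ j, M0 i (Sum.inl j) • w j := by
        refine (sum_swap_smul (T i) hm w).symm.trans ?_
        exact Finset.sum_congr rfl fun j _ => by rw [← hT i j]
      have h12 : ∑ j, M0 i (Sum.inr j) • f (a j) = - ∑ j, M0 i (Sum.inl j) • w j :=
        eq_neg_of_add_eq_zero_right (hrel' i)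
      rw [h9, h10, h11, h12]
      abel
    set P' : Matrix (Fin n ⊕ Fin b) (Fin n ⊕ Fin b) R :=
      Matrix.of fun i => Sum.elim (fun k => T i k) (fun j => U i j) with hP'0
    set Q' : Matrix (Fin n ⊕ Fin b) (Fin n ⊕ Fin b) R := Matrix.fromBlocks hm X 0 1 with hQ'0
    have hfact : M0 = P' * Q' := by
      ext i z
      rw [Matrix.mul_apply, Fintype.sum_sum_type]
      cases z with
      | inl j =>
        simp only [hP'0, hQ'0, Matrix.of_apply, Sum.elim_inl, Sum.elim_inr,
          Matrix.fromBlocks_apply₁₁, Matrix.fromBlocks_apply₂₁, Matrix.zero_apply,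
          mul_zero, Finset.sum_const_zero, add_zero]
        exact hT i j
      | inr j =>
        simp only [hP'0, hQ'0, Matrix.of_apply, Sum.elim_inl, Sum.elim_inr,
          Matrix.fromBlocks_apply₁₂, Matrix.fromBlocks_apply₂₂, Matrix.one_apply, mul_ite,
          mul_one, mul_zero, Finset.sum_ite_eq', Finset.mem_univ, if_true, hU0]
        ring
    have hdetP' : P'.det ∈ fittingIdeal R A := by
      have h13 := det_mem_span_relations (relSub R a) P' (fun i => hU i)
      rw [hA, relIdeal, relGens_eq_relSub]
      exact h13
    rw [hfact, Matrix.det_mul, hQ'0, Matrix.det_fromBlocks_zero₂₁, Matrix.det_one, mul_one]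
    exact Ideal.mul_mem_mul hdetP' hdet_hm
  · -- easy direction: Fitt A * Fitt C ≤ Fitt B
    rw [hA, hCfit, relIdeal, relIdeal, Ideal.span_mul_span, hB, relIdeal]
    refine Ideal.span_le.mpr ?_
    rintro r hr
    rw [Set.mem_mul] at hr
    obtain ⟨da, hda, dc, hdc, rfl⟩ := hr
    obtain ⟨Wa, rfl, hWa⟩ := hda
    obtain ⟨Wc, rfl, hWc⟩ := hdc
    -- build the block relation matrix for the family u
    have hkerc : ∀ i, g (∑ j, Wc i j • w j) = 0 := fun i => by
      rw [lmap_sum_smul, show (∑ j, Wc i j • g (w j)) = ∑ j, Wc i j • c j from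
        Finset.sum_congr rfl fun j _ => by rw [hw], hWc i]
    choose z hz using fun i => (hfg _).mp (hkerc i)
    choose q hq using fun i => (Submodule.mem_span_range_iff_exists_fun R).mp
      (haspan ▸ Submodule.mem_top : z i ∈ Submodule.span R (Set.range a))
    set Y : Matrix (Fin n) (Fin b) R := Matrix.of fun i l => -(q i l) with hY
    refine Ideal.subset_span ⟨Matrix.fromBlocks Wc Y 0 Wa,
      by rw [Matrix.det_fromBlocks_zero₂₁]; ring, fun i => ?_⟩
    rw [Fintype.sum_sum_type]
    cases i with
    | inl i =>
      have hY1 : ∑ l, Y i l • u (Sum.inr l) = - ∑ j, Wc i j • w j := by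
        have h14 : ∑ l, Y i l • u (Sum.inr l) = - ∑ l, q i l • f (a l) := by
          rw [← Finset.sum_neg_distrib]
          exact Finset.sum_congr rfl fun l _ => by
            show (-(q i l)) • f (a l) = -(q i l • f (a l))
            rw [neg_smul]
        rw [h14, ← lmap_sum_smul f, hq, hz]
      have hY2 : ∀ j, Matrix.fromBlocks Wc Y 0 Wa (Sum.inl i) (Sum.inl j) • u (Sum.inl j)
          = Wc i j • w j := fun j => rfl
      rw [Finset.sum_congr rfl fun j _ => hY2 j]
      have hY3 : ∀ l, Matrix.fromBlocks Wc Y 0 Wa (Sum.inl i) (Sum.inr l) • u (Sum.inr l)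
          = Y i l • u (Sum.inr l) := fun l => rfl
      rw [Finset.sum_congr rfl fun l _ => hY3 l, hY1]
      abel
    | inr i =>
      have hY4 : ∀ j, Matrix.fromBlocks Wc Y 0 Wa (Sum.inr i) (Sum.inl j) • u (Sum.inl j)
          = 0 := fun j => by
        show (0 : Matrix (Fin b) (Fin n) R) i j • u (Sum.inl j) = 0
        rw [Matrix.zero_apply, zero_smul]
      rw [Finset.sum_congr rfl fun j _ => hY4 j]
      have hY5 : ∑ l, Matrix.fromBlocks Wc Y 0 Wa (Sum.inr i) (Sum.inr l) • u (Sum.inr l)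
          = f (∑ l, Wa i l • a l) := by
        rw [lmap_sum_smul]
        rfl
      rw [hY5, hWa i, map_zero]
      simp
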